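/- (Theorem 3 with non-accelerated iteration count: O(1/√T) rate.) Under the hypotheses of Theorem 3 (per-stage form), suppose additionally that stage s uses T_s = τ^{2(s−1)}·T_1 iterations with T_1 > 0, and let T = Σ_{s=1}^S T_s. Set r = T_1/(T_1 + (τ² − 1)·T), so that r = τ^{−2S}. Then P(x̃_S) − P(x*) ≤ r·(P(x̃_0) − P(x*) + (λ_1/2)‖x̃_0‖₂² + γ_1·D_u) + (γ_1·D_u + (λ_1/2)·R²)·(τ²/(τ − 1))·√r. In particular, the first term is O(1/T) and the second is O((γ_1·D_u + λ_1·R²/2)/√T). -/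

import Mathlib

open Finset

set_option maxHeartbeats 1000000

/-- **Theorem 3 with non-accelerated iteration count: `O(1/√T)` rate.** Under the
hypotheses of Theorem 3 (per-stage form), suppose stage `s` uses
`T_s = τ^{2(s−1)} T_1` iterations with `T_1 > 0`, and let `T = Σ_{s=1}^S T_s`.  Set
`r = T_1/(T_1 + (τ² − 1) T)`, so that `r = τ^{−2S}`.  Then
`P(x̃_S) − P(x*) ≤ r (P(x̃_0) − P(x*) + (λ_1/2)‖x̃_0‖₂² + γ_1 D_u)
+ (γ_1 D_u + (λ_1/2)R²)(τ²/(τ−1))√r`,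
i.e. the first term is `O(1/T)` and the second `O((γ_1 D_u + λ_1 R²/2)/√T)`. -/
theorem cns_general_convex_nonaccelerated_rate {d : ℕ}
    (τ γ1 lam1 Du R : ℝ) (hτ : 1 < τ) (hγ1 : 0 < γ1) (hlam1 : 0 < lam1)
    (hDu : 0 ≤ Du) (hR : 0 ≤ R) (S : ℕ) (hS : 1 ≤ S)
    (P : EuclideanSpace ℝ (Fin d) → ℝ) (xstar : EuclideanSpace ℝ (Fin d))
    (hxstar : ∀ y, P xstar ≤ P y) (hxstarR : ‖xstar‖ ≤ R)
    (Pt : ℕ → EuclideanSpace ℝ (Fin d) → ℝ)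
    (hsand : ∀ s, 1 ≤ s → s ≤ S → ∀ x,
      Pt s x ≤ P x ∧ P x ≤ Pt s x + γ1 / τ ^ (s - 1) * Du)
    (hmono : ∀ s, 1 ≤ s → s < S → ∀ x, Pt s x ≤ Pt (s + 1) x)
    (H : ℕ → EuclideanSpace ℝ (Fin d) → ℝ)
    (hH : ∀ s, 1 ≤ s → s ≤ S → ∀ x,
      H s x = Pt s x + lam1 / τ ^ (s - 1) / 2 * ‖x‖ ^ 2)
    (xs : ℕ → EuclideanSpace ℝ (Fin d))
    (hxs : ∀ s, 1 ≤ s → s ≤ S → ∀ y, H s (xs s) ≤ H s y)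
    (hxsR : ∀ s, 1 ≤ s → s ≤ S → ‖xs s‖ ≤ R)
    (xt : ℕ → EuclideanSpace ℝ (Fin d)) (ρ : ℕ → ℝ)
    (hρ : ∀ s, 1 ≤ s → s ≤ S → ρ s ∈ Set.Ioc 0 (1 / τ ^ 2))
    (hred : ∀ s, 1 ≤ s → s ≤ S →
      H s (xt s) - H s (xs s) ≤ ρ s * (H s (xt (s - 1)) - H s (xs s)))
    (T1 : ℝ) (hT1 : 0 < T1) (Ts : ℕ → ℝ)
    (hTs : ∀ s, 1 ≤ s → s ≤ S → Ts s = τ ^ (2 * (s - 1)) * T1)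
    (T r : ℝ) (hT : T = ∑ s ∈ Finset.Icc 1 S, Ts s)
    (hr : r = T1 / (T1 + (τ ^ 2 - 1) * T)) :
    r = (τ ^ (2 * S))⁻¹ ∧
    P (xt S) - P xstar ≤
      r * (P (xt 0) - P xstar + lam1 / 2 * ‖xt 0‖ ^ 2 + γ1 * Du) +
        (γ1 * Du + lam1 / 2 * R ^ 2) * (τ ^ 2 / (τ - 1)) * Real.sqrt r := by
  have hτ0 : (0:ℝ) < τ := lt_trans one_pos hτ
  have hτne : τ ≠ 0 := ne_of_gt hτ0
  have hτ1 : (0:ℝ) < τ - 1 := by linarith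
  have hτ2 : (1:ℝ) < τ ^ 2 := by nlinarith
  have hτ2ne : τ ^ 2 - 1 ≠ 0 := by nlinarith
  -- Part 1 : r = (τ^(2S))⁻¹
  have hsum : ∑ s ∈ Finset.Icc 1 S, Ts s = T1 * ((τ^2)^S - 1) / (τ^2 - 1) := by
    have h1 : ∑ s ∈ Finset.Icc 1 S, Ts s = ∑ i ∈ Finset.range S, (τ^2)^i * T1 := by
      rw [← Finset.Ico_add_one_right_eq_Icc, Finset.sum_Ico_eq_sum_range]
      apply Finset.sum_congr (by simp)
      intro i hi
      simp only [Finset.mem_range] at hi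
      rw [hTs (1+i) (by omega) (by omega)]
      congr 1
      rw [← pow_mul]
      congr 1
      omega
    rw [h1, ← Finset.sum_mul, geom_sum_eq (ne_of_gt hτ2)]
    ring
  have hrS : r = (τ ^ (2 * S))⁻¹ := by
    have hp : (τ^2)^S = τ ^ (2*S) := by rw [← pow_mul]
    have hT' : T1 + (τ ^ 2 - 1) * T = T1 * τ ^ (2*S) := by
      rw [hT, hsum, ← hp]
      field_simp
      ring
    rw [hr, hT', ← hp]
    have h2 : (τ:ℝ)^2 ≠ 0 := by positivity
    have h3 : ((τ:ℝ)^2)^S ≠ 0 := pow_ne_zero _ h2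
    field_simp
  refine ⟨hrS, ?_⟩
  -- abbreviations
  set Δ : ℕ → ℝ := fun s => H s (xt s) - H s (xs s) with hΔ
  set E0 : ℝ := P (xt 0) - P xstar + lam1 / 2 * ‖xt 0‖ ^ 2 + γ1 * Du with hE0
  set A : ℝ := γ1 * Du + lam1 / 2 * R ^ 2 * ((τ - 1) / τ) with hA
  set B : ℝ := γ1 * Du + lam1 / 2 * R ^ 2 with hB
  clear_value Δ E0 A B
  have hγDu : 0 ≤ γ1 * Du := mul_nonneg (le_of_lt hγ1) hDu
  have hlR : 0 ≤ lam1 / 2 * R ^ 2 := by positivity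
  have hA0 : 0 ≤ A := by
    have h1 : 0 ≤ (τ - 1) / τ := by positivity
    have h2 := mul_nonneg hlR h1
    rw [hA]; linarith
  have hAB : A ≤ B := by
    have h1 : (τ - 1) / τ ≤ 1 := by
      rw [div_le_one hτ0]; linarith
    have h2 := mul_le_of_le_one_right hlR h1
    rw [hA, hB]; linarith
  have hB0 : 0 ≤ B := by rw [hB]; linarith
  -- one-step recursion
  have hstep : ∀ m : ℕ, m + 1 < S →
      Δ (m + 2) ≤ 1 / τ ^ 2 * (Δ (m + 1) + A / τ ^ m) := by
    intro m hmS
    have er1 : m + 2 - 1 = m + 1 := rfl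
    have er2 : m + 1 - 1 = m := rfl
    have hm1S : m + 1 ≤ S := le_of_lt hmS
    have hm2S : m + 2 ≤ S := hmS
    have hz : ‖xs (m+2)‖ ≤ R := hxsR (m+2) (by omega) hm2S
    have hzn : 0 ≤ ‖xs (m+2)‖ := norm_nonneg _
    have hxtn : 0 ≤ ‖xt (m+1)‖^2 := by positivity
    have hpm : (0:ℝ) < τ ^ m := pow_pos hτ0 m
    have hpm1 : (0:ℝ) < τ ^ (m+1) := pow_pos hτ0 _
    have hmle : τ ^ m ≤ τ ^ (m+1) := pow_le_pow_right₀ (le_of_lt hτ) (Nat.le_succ m)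
    have hcoef : lam1 / τ ^ (m+1) / 2 ≤ lam1 / τ ^ m / 2 := by gcongr
    have h1 : H (m+2) (xt (m+1)) ≤ H (m+1) (xt (m+1)) + γ1 / τ ^ m * Du := by
      rw [hH (m+2) (by omega) hm2S, hH (m+1) (by omega) hm1S, er1, er2]
      have ha := (hsand (m+2) (by omega) hm2S (xt (m+1))).1
      have hb := (hsand (m+1) (by omega) hm1S (xt (m+1))).2
      rw [er2] at hb
      have hc := mul_le_mul_of_nonneg_right hcoef hxtn
      linarith
    have h2 : H (m+1) (xs (m+1)) ≤ H (m+2) (xs (m+2)) +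
        (lam1 / τ ^ m / 2 - lam1 / τ ^ (m+1) / 2) * R ^ 2 := by
      have hmin := hxs (m+1) (by omega) hm1S (xs (m+2))
      have e4 := hH (m+1) (by omega) hm1S (xs (m+2))
      have e5 := hH (m+2) (by omega) hm2S (xs (m+2))
      rw [er2] at e4
      rw [er1] at e5
      have hmono' := hmono (m+1) (by omega) hmS (xs (m+2))
      have hsq : ‖xs (m+2)‖^2 ≤ R^2 := pow_le_pow_left₀ hzn hz 2
      have hd : 0 ≤ lam1 / τ ^ m / 2 - lam1 / τ ^ (m+1) / 2 := by linarith
      have hprod : (lam1 / τ ^ m / 2 - lam1 / τ ^ (m+1) / 2) * ‖xs (m+2)‖^2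
          ≤ (lam1 / τ ^ m / 2 - lam1 / τ ^ (m+1) / 2) * R ^ 2 :=
        mul_le_mul_of_nonneg_left hsq hd
      linarith
    have hgap0 : 0 ≤ H (m+2) (xt (m+1)) - H (m+2) (xs (m+2)) :=
      sub_nonneg.mpr (hxs (m+2) (by omega) hm2S (xt (m+1)))
    obtain ⟨hρpos, hρle⟩ := hρ (m+2) (by omega) hm2S
    have hredd := hred (m+2) (by omega) hm2S
    rw [er1] at hredd
    have hAeq : γ1 / τ ^ m * Du + (lam1 / τ ^ m / 2 - lam1 / τ ^ (m+1) / 2) * R ^ 2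
        = A / τ ^ m := by
      rw [hA]
      field_simp
      ring
    have hgapA : H (m+2) (xt (m+1)) - H (m+2) (xs (m+2)) ≤ Δ (m+1) + A / τ ^ m := by
      simp only [hΔ]
      linarith
    calc Δ (m+2) = H (m+2) (xt (m+2)) - H (m+2) (xs (m+2)) := by rw [hΔ]
      _ ≤ ρ (m+2) * (H (m+2) (xt (m+1)) - H (m+2) (xs (m+2))) := hredd
      _ ≤ 1 / τ ^ 2 * (H (m+2) (xt (m+1)) - H (m+2) (xs (m+2))) :=
          mul_le_mul_of_nonneg_right hρle hgap0
      _ ≤ 1 / τ ^ 2 * (Δ (m+1) + A / τ ^ m) := by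
          apply mul_le_mul_of_nonneg_left hgapA
          positivity
  -- base case
  have hbase : τ ^ (2 * 1) * Δ 1 ≤ E0 := by
    have h1S : 1 ≤ S := hS
    have hgap0 : 0 ≤ H 1 (xt 0) - H 1 (xs 1) := sub_nonneg.mpr (hxs 1 le_rfl h1S (xt 0))
    obtain ⟨hρpos, hρle⟩ := hρ 1 le_rfl h1S
    have hredd : Δ 1 ≤ ρ 1 * (H 1 (xt 0) - H 1 (xs 1)) := by
      simp only [hΔ]; exact hred 1 le_rfl h1S
    have hE : H 1 (xt 0) - H 1 (xs 1) ≤ E0 := by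
      have e1 := hH 1 le_rfl h1S (xt 0)
      have e2 := hH 1 le_rfl h1S (xs 1)
      have er0 : (1:ℕ) - 1 = 0 := rfl
      rw [er0, pow_zero, div_one] at e1 e2
      have ha := (hsand 1 le_rfl h1S (xt 0)).1
      have hb := (hsand 1 le_rfl h1S (xs 1)).2
      rw [er0, pow_zero, div_one] at hb
      have hc := hxstar (xs 1)
      have hn : 0 ≤ lam1 / 2 * ‖xs 1‖^2 := by positivity
      rw [hE0]
      linarith
    have hD1 : Δ 1 ≤ 1 / τ ^ 2 * E0 := by
      calc Δ 1 ≤ ρ 1 * (H 1 (xt 0) - H 1 (xs 1)) := hredd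
        _ ≤ 1 / τ ^ 2 * (H 1 (xt 0) - H 1 (xs 1)) := mul_le_mul_of_nonneg_right hρle hgap0
        _ ≤ 1 / τ ^ 2 * E0 := by apply mul_le_mul_of_nonneg_left hE; positivity
    calc τ ^ (2*1) * Δ 1 ≤ τ ^ (2*1) * (1 / τ ^ 2 * E0) := by
          apply mul_le_mul_of_nonneg_left hD1 (by positivity)
      _ = E0 := by field_simp
  -- induction
  have key : ∀ n, 1 ≤ n → n ≤ S → τ ^ (2 * n) * Δ n ≤ E0 + A * ∑ j ∈ Finset.Icc 2 n, τ ^ j := by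
    intro n
    induction n with
    | zero => omega
    | succ m ih =>
      intro _ hnS
      rcases Nat.eq_zero_or_pos m with hm0 | hm1
      · subst hm0
        simpa using hbase
      · obtain ⟨k, rfl⟩ : ∃ k, m = k + 1 := ⟨m - 1, by omega⟩
        have ihm := ih (by omega) (by omega)
        have hst := hstep k (by omega)
        have hpow : τ ^ (2 * (k + 2)) * (1 / τ ^ 2 * (Δ (k + 1) + A / τ ^ k))
            = τ ^ (2 * (k + 1)) * Δ (k + 1) + A * τ ^ (k + 2) := by
          have e1 : 2 * (k + 2) = 2 * (k + 1) + 2 := by ring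
          have e2 : 2 * (k + 1) = k + (k + 2) := by ring
          rw [e1, e2, pow_add, pow_add]
          field_simp
        have hsum2 : ∑ j ∈ Finset.Icc 2 (k + 2), (τ:ℝ) ^ j
            = (∑ j ∈ Finset.Icc 2 (k + 1), τ ^ j) + τ ^ (k + 2) :=
          Finset.sum_Icc_succ_top (by omega) _
        have hτ2pos : (0:ℝ) < τ ^ (2 * (k + 2)) := by positivity
        calc τ ^ (2 * (k + 2)) * Δ (k + 2)
            ≤ τ ^ (2 * (k + 2)) * (1 / τ ^ 2 * (Δ (k + 1) + A / τ ^ k)) :=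
              mul_le_mul_of_nonneg_left hst (le_of_lt hτ2pos)
          _ = τ ^ (2 * (k + 1)) * Δ (k + 1) + A * τ ^ (k + 2) := hpow
          _ ≤ E0 + A * ∑ j ∈ Finset.Icc 2 (k + 1), τ ^ j + A * τ ^ (k + 2) := by linarith
          _ = E0 + A * ∑ j ∈ Finset.Icc 2 (k + 2), τ ^ j := by rw [hsum2]; ring
  have hkeyS := key S hS le_rfl
  -- final P bound
  obtain ⟨m, rfl⟩ : ∃ m, S = m + 1 := ⟨S - 1, by omega⟩
  have hpm : (0:ℝ) < τ ^ m := pow_pos hτ0 m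
  have hfin : P (xt (m+1)) - P xstar ≤ Δ (m+1) + B / τ ^ m := by
    have er2 : m + 1 - 1 = m := rfl
    have e1 := hH (m+1) (by omega) le_rfl (xt (m+1))
    have e2 := hH (m+1) (by omega) le_rfl xstar
    rw [er2] at e1 e2
    have ha := (hsand (m+1) (by omega) le_rfl (xt (m+1))).2
    have hb := (hsand (m+1) (by omega) le_rfl xstar).1
    rw [er2] at ha
    have hmin := hxs (m+1) (by omega) le_rfl xstar
    have hsq : ‖xstar‖^2 ≤ R^2 := pow_le_pow_left₀ (norm_nonneg xstar) hxstarR 2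
    have hlcoef : (0:ℝ) < lam1 / τ ^ m / 2 := by positivity
    have hprod1 : lam1 / τ ^ m / 2 * ‖xstar‖^2 ≤ lam1 / τ ^ m / 2 * R^2 :=
      mul_le_mul_of_nonneg_left hsq (le_of_lt hlcoef)
    have hprod2 : 0 ≤ lam1 / τ ^ m / 2 * ‖xt (m+1)‖^2 := by positivity
    have hBe : γ1 / τ ^ m * Du + lam1 / τ ^ m / 2 * R ^ 2 = B / τ ^ m := by
      rw [hB]; field_simp
    simp only [hΔ]
    linarith
  -- assemble
  have hpS : (0:ℝ) < τ ^ (m+1) := pow_pos hτ0 _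
  have hp2S : (0:ℝ) < τ ^ (2 * (m+1)) := pow_pos hτ0 _
  have hsqrt : Real.sqrt r = (τ ^ (m+1))⁻¹ := by
    rw [hrS]
    have hx : τ ^ (2 * (m+1)) = (τ ^ (m+1)) ^ 2 := by rw [← pow_mul]; ring_nf
    rw [hx, Real.sqrt_inv, Real.sqrt_sq (le_of_lt hpS)]
  have hSg0 : (0:ℝ) ≤ ∑ j ∈ Finset.Icc 2 (m+1), (τ:ℝ) ^ j := by
    apply Finset.sum_nonneg; intro i _; positivity
  have hgeo : ∑ j ∈ Finset.Icc 2 (m+1), (τ:ℝ) ^ j ≤ τ ^ (m+2) / (τ - 1) := by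
    have hsub : Finset.Icc 2 (m+1) ⊆ Finset.range (m+2) := by
      intro j hj
      simp only [Finset.mem_Icc] at hj
      simp only [Finset.mem_range]
      omega
    have h1 : ∑ j ∈ Finset.Icc 2 (m+1), (τ:ℝ) ^ j ≤ ∑ j ∈ Finset.range (m+2), τ ^ j := by
      apply Finset.sum_le_sum_of_subset_of_nonneg hsub
      intro i _ _
      positivity
    have h2 : ∑ j ∈ Finset.range (m+2), (τ:ℝ) ^ j = (τ ^ (m+2) - 1) / (τ - 1) :=
      geom_sum_eq (ne_of_gt hτ) _
    have h3 : (τ ^ (m+2) - (1:ℝ)) / (τ - 1) ≤ τ ^ (m+2) / (τ - 1) := by gcongr; linarith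
    linarith
  have hΔle : Δ (m+1) ≤ r * E0 +
      A * (∑ j ∈ Finset.Icc 2 (m+1), τ ^ j) * (τ ^ (2 * (m+1)))⁻¹ := by
    have h : (τ ^ (2 * (m+1)) * Δ (m+1)) * (τ ^ (2 * (m+1)))⁻¹ ≤
        (E0 + A * ∑ j ∈ Finset.Icc 2 (m+1), τ ^ j) * (τ ^ (2 * (m+1)))⁻¹ :=
      mul_le_mul_of_nonneg_right hkeyS (by positivity)
    rw [mul_comm (τ ^ (2 * (m+1))) (Δ (m+1)), mul_assoc,
        mul_inv_cancel₀ (ne_of_gt hp2S), mul_one] at h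
    rw [hrS]
    linarith
  have hterm : A * (∑ j ∈ Finset.Icc 2 (m+1), τ ^ j) * (τ ^ (2 * (m+1)))⁻¹ + B / τ ^ m
      ≤ B * (τ ^ 2 / (τ - 1)) * (τ ^ (m+1))⁻¹ := by
    have hAS : A * (∑ j ∈ Finset.Icc 2 (m+1), τ ^ j) ≤ B * (τ ^ (m+2) / (τ - 1)) := by
      calc A * (∑ j ∈ Finset.Icc 2 (m+1), τ ^ j) ≤ A * (τ ^ (m+2) / (τ - 1)) :=
            mul_le_mul_of_nonneg_left hgeo hA0
        _ ≤ B * (τ ^ (m+2) / (τ - 1)) := by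
            apply mul_le_mul_of_nonneg_right hAB
            positivity
    have h1 : A * (∑ j ∈ Finset.Icc 2 (m+1), τ ^ j) * (τ ^ (2 * (m+1)))⁻¹
        ≤ B * (τ ^ (m+2) / (τ - 1)) * (τ ^ (2 * (m+1)))⁻¹ :=
      mul_le_mul_of_nonneg_right hAS (by positivity)
    have heq : B * (τ ^ (m+2) / (τ - 1)) * (τ ^ (2 * (m+1)))⁻¹ + B / τ ^ m
        = B * (τ ^ 2 / (τ - 1)) * (τ ^ (m+1))⁻¹ := by
      have e1 : 2 * (m+1) = m + (m + 2) := by ring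
      have e2 : m + 2 = m + 2 := rfl
      rw [e1, pow_add]
      have hτ1ne : τ - 1 ≠ 0 := ne_of_gt hτ1
      have hp2ne : (τ:ℝ) ^ (m+2) ≠ 0 := by positivity
      have hpmne : (τ:ℝ) ^ m ≠ 0 := ne_of_gt hpm
      have hp1ne : (τ:ℝ) ^ (m+1) ≠ 0 := ne_of_gt hpS
      field_simp
      ring
    linarith only [h1, heq]
  rw [hsqrt]
  calc P (xt (m+1)) - P xstar ≤ Δ (m+1) + B / τ ^ m := hfin
    _ ≤ r * E0 + (A * (∑ j ∈ Finset.Icc 2 (m+1), τ ^ j) * (τ ^ (2 * (m+1)))⁻¹ + B / τ ^ m) := by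
        linarith
    _ ≤ r * E0 + B * (τ ^ 2 / (τ - 1)) * (τ ^ (m+1))⁻¹ := by linarith
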